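/- For every Borel homomorphism F from 𝔽₂ to 𝔽₂ (on ℝ^ω, mapping countable sets of reals to countable sets of reals in an 𝔽₂-invariant way), there exists x ∈ ℝ^ω such that the countable set enumerated by F(x) is contained in the countable set enumerated by x. -/

import Mathlib

open Set

noncomputable section
namespace Stmt16

/-- finite prefix of a sequence, as a list -/
def pref (y : ℕ → ℝ) (k : ℕ) : List ℝ := (List.range k).map y

@[simp] lemma pref_length (y : ℕ → ℝ) (k : ℕ) : (pref y k).length = k := by
  simp [pref]

lemma pref_getElem (y : ℕ → ℝ) (k i : ℕ) (h : i < (pref y k).length) :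
    (pref y k)[i] = y i := by
  simp [pref]

lemma pref_prefix (y : ℕ → ℝ) {a b : ℕ} (h : a ≤ b) : pref y a <+: pref y b := by
  have : List.range a <+: List.range b := by
    have e : List.range a = (List.range b).take a := by
      rw [List.take_range, min_eq_left h]
    rw [e]
    exact List.take_prefix _ _
  exact this.map y

/-- the cylinder of sequences extending a finite list -/
def cyl (s : List ℝ) : Set (ℕ → ℝ) := {y | ∀ i, (h : i < s.length) → y i = s[i]}

lemma mem_cyl_pref (y : ℕ → ℝ) (k : ℕ) : y ∈ cyl (pref y k) := by
  intro i h
  exact (pref_getElem y k i h).symm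

lemma cyl_anti {s t : List ℝ} (h : s <+: t) : cyl t ⊆ cyl s := by
  intro y hy i hi
  rw [h.getElem hi]
  exact hy i (lt_of_lt_of_le hi h.length_le)

lemma eq_pref_of_mem_cyl {y : ℕ → ℝ} {s : List ℝ} (h : y ∈ cyl s) :
    s = pref y s.length := by
  apply List.ext_getElem (by simp)
  intro i h1 h2
  rw [pref_getElem, ← h i h1]

/-- Forcing machinery for a Borel set `B ⊆ ℝ^ω`, with conditions finite lists of reals.
`pos s` / `neg s` : condition `s` forces membership / non-membership;
`D` : a countable family of dense sets of conditions such that for sequences generic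
with respect to them, membership in `B` is decided by some finite prefix. -/
structure Mach (B : Set (ℕ → ℝ)) where
  pos : List ℝ → Prop
  neg : List ℝ → Prop
  D : ℕ → List ℝ → Prop
  posMono : ∀ {s t : List ℝ}, s <+: t → pos s → pos t
  negMono : ∀ {s t : List ℝ}, s <+: t → neg s → neg t
  dense : ∀ n s, ∃ t, s <+: t ∧ D n t
  dec0 : ∀ s, D 0 s ↔ (pos s ∨ neg s)
  sound_pos : ∀ y, (∀ n, ∃ k, D n (pref y k)) → ∀ k, pos (pref y k) → y ∈ B
  sound_neg : ∀ y, (∀ n, ∃ k, D n (pref y k)) → ∀ k, neg (pref y k) → y ∉ B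

def Mach.gen {B : Set (ℕ → ℝ)} (M : Mach B) (y : ℕ → ℝ) : Prop :=
  ∀ n, ∃ k, M.D n (pref y k)

lemma Mach.complete {B : Set (ℕ → ℝ)} (M : Mach B) (y : ℕ → ℝ) (hg : M.gen y)
    (hy : y ∈ B) : ∃ k, M.pos (pref y k) := by
  obtain ⟨k, hk⟩ := hg 0
  rcases (M.dec0 _).1 hk with h | h
  · exact ⟨k, h⟩
  · exact absurd hy (M.sound_neg y hg k h)

/-- machinery for an open set -/
def machOpen (U : Set (ℕ → ℝ)) (hU : IsOpen U) : Mach U where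
  pos s := cyl s ⊆ U
  neg s := cyl s ∩ U = ∅
  D _ s := cyl s ⊆ U ∨ cyl s ∩ U = ∅
  posMono h hp := subset_trans (cyl_anti h) hp
  negMono h hn := subset_empty_iff.mp (le_trans (inter_subset_inter_left _ (cyl_anti h)) hn.le)
  dense := by
    intro _ s
    by_cases h : ∃ y, y ∈ cyl s ∩ U
    · obtain ⟨y, hy, hyU⟩ := h
      obtain ⟨I, u, hu, hsub⟩ := isOpen_pi_iff.mp hU y hyU
      classical
      set N : ℕ := max s.length ((I.sup id) + 1) with hN
      refine ⟨pref y N, ?_, Or.inl ?_⟩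
      · rw [eq_pref_of_mem_cyl hy]
        exact pref_prefix y (le_max_left _ _)
      · intro z hz
        apply hsub
        intro a ha
        have haN : a < N := by
          have : a ≤ I.sup id := Finset.le_sup (f := id) ha
          omega
        have : z a = y a := by
          have := hz a (by simpa using haN)
          rwa [pref_getElem] at this
        rw [this]
        exact (hu a ha).2
    · refine ⟨s, List.prefix_refl s, Or.inr ?_⟩
      rw [eq_empty_iff_forall_notMem]
      intro y hy
      exact h ⟨y, hy⟩
  dec0 _ := Iff.rfl
  sound_pos y _ k hp := hp (mem_cyl_pref y k)
  sound_neg y _ k hn hyU := by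
    have hn' : cyl (pref y k) ∩ U = ∅ := hn
    rw [eq_empty_iff_forall_notMem] at hn'
    exact hn' y ⟨mem_cyl_pref y k, hyU⟩

/-- machinery for a complement -/
def machCompl {B : Set (ℕ → ℝ)} (M : Mach B) : Mach Bᶜ where
  pos := M.neg
  neg := M.pos
  D := M.D
  posMono := M.negMono
  negMono := M.posMono
  dense := M.dense
  dec0 s := by rw [M.dec0 s]; exact or_comm
  sound_pos y hg k h := M.sound_neg y hg k h
  sound_neg y hg k h := by simpa using M.sound_pos y hg k h

def machEmpty : Mach (∅ : Set (ℕ → ℝ)) where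
  pos _ := False
  neg _ := True
  D _ _ := True
  posMono _ h := h
  negMono _ _ := trivial
  dense _ s := ⟨s, List.prefix_refl s, trivial⟩
  dec0 _ := by simp
  sound_pos _ _ _ h := h.elim
  sound_neg _ _ _ _ h := h

end Stmt16

noncomputable section
namespace Stmt16

/-- machinery for countable intersections -/
def machInter (f : ℕ → Set (ℕ → ℝ)) (Mk : ∀ k, Mach (f k)) : Mach (⋂ k, f k) where
  pos s := ∀ k t, s <+: t → ¬ (Mk k).neg t
  neg s := ∃ k, (Mk k).neg s
  D n s := match n with
    | 0 => (∀ k t, s <+: t → ¬ (Mk k).neg t) ∨ (∃ k, (Mk k).neg s)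
    | n + 1 => (Mk (Nat.unpair n).1).D (Nat.unpair n).2 s
  posMono := by
    intro s t hst hp k u htu
    exact hp k u (hst.trans htu)
  negMono := by
    rintro s t hst ⟨k, hk⟩
    exact ⟨k, (Mk k).negMono hst hk⟩
  dense := by
    intro n s
    match n with
    | 0 =>
      by_cases h : ∃ t, s <+: t ∧ ∃ k, (Mk k).neg t
      · obtain ⟨t, hst, hk⟩ := h
        exact ⟨t, hst, Or.inr hk⟩
      · refine ⟨s, List.prefix_refl s, Or.inl ?_⟩
        intro k t hst hneg
        exact h ⟨t, hst, k, hneg⟩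
    | n + 1 => exact (Mk _).dense _ s
  dec0 s := Iff.rfl
  sound_pos := by
    intro y hg k hp
    have subgen : ∀ j, (Mk j).gen y := by
      intro j n
      have h2 : ∃ k, (Mk (Nat.unpair (Nat.pair j n)).1).D (Nat.unpair (Nat.pair j n)).2
          (pref y k) := hg (Nat.pair j n + 1)
      rw [Nat.unpair_pair] at h2
      exact h2
    refine mem_iInter.mpr fun j => ?_
    obtain ⟨a, ha⟩ := subgen j 0
    rcases (Mk j).dec0 _ |>.1 ha with h | h
    · exact (Mk j).sound_pos y (subgen j) a h
    · exfalso
      rcases le_total a k with hak | hka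
      · exact hp j (pref y k) (List.prefix_refl _) ((Mk j).negMono (pref_prefix y hak) h)
      · exact hp j (pref y a) (pref_prefix y hka) h
  sound_neg := by
    rintro y hg k ⟨j, hj⟩ hy
    have subgen : ∀ j, (Mk j).gen y := by
      intro j n
      have h2 : ∃ k, (Mk (Nat.unpair (Nat.pair j n)).1).D (Nat.unpair (Nat.pair j n)).2
          (pref y k) := hg (Nat.pair j n + 1)
      rw [Nat.unpair_pair] at h2
      exact h2
    exact (Mk j).sound_neg y (subgen j) k hj (mem_iInter.mp hy j)

/-- transport machinery along set equality -/
def machCast {B C : Set (ℕ → ℝ)} (h : B = C) (M : Mach B) : Mach C := h ▸ M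

theorem mach_of_measurable (B : Set (ℕ → ℝ)) (hB : MeasurableSet B) : Nonempty (Mach B) := by
  have hB2 : @MeasurableSet _ (MeasurableSpace.generateFrom {s : Set (ℕ → ℝ) | IsOpen s}) B := by
    rw [show MeasurableSpace.generateFrom {s : Set (ℕ → ℝ) | IsOpen s} =
        (inferInstance : MeasurableSpace (ℕ → ℝ)) from BorelSpace.measurable_eq.symm]
    exact hB
  clear hB
  induction B, hB2 using MeasurableSpace.generateFrom_induction with
  | hC t ht _ => exact ⟨machOpen t ht⟩
  | empty => exact ⟨machEmpty⟩
  | compl t ht ih =>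
      obtain ⟨M⟩ := ih
      exact ⟨machCompl M⟩
  | iUnion s hs ih =>
      have : ∀ n, Nonempty (Mach ((s n)ᶜ)) := fun n => (ih n).elim fun M => ⟨machCompl M⟩
      refine ⟨machCast ?_ (machCompl (machInter _ (fun n => (this n).some)))⟩
      simp [compl_iInter]

end Stmt16

noncomputable section
namespace Stmt16
open Classical

section Main
variable (F : (ℕ → ℝ) → (ℕ → ℝ)) (hBorel : Measurable F)

def Bset (m : ℕ) (q r : ℚ) : Set (ℕ → ℝ) := {w | F w m ∈ Set.Ioo (q : ℝ) (r : ℝ)}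

def MM (m : ℕ) (q r : ℚ) : Mach (Bset F m q r) :=
  (mach_of_measurable _ (((measurable_pi_apply m).comp hBorel) measurableSet_Ioo)).some

def V (m m' : ℕ) (s t : List ℝ) (q r : ℚ) : Prop :=
  ∃ s' t', s <+: s' ∧ t <+: t' ∧ (MM F hBorel m q r).pos s' ∧ (MM F hBorel m' q r).pos t'

def forcesEq (m m' : ℕ) (s t : List ℝ) : Prop :=
  ¬ ∃ (s' t' : List ℝ) (q r q' r' : ℚ), s <+: s' ∧ t <+: t' ∧ ((r : ℚ) ≤ q' ∨ r' ≤ q) ∧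
      (MM F hBorel m q r).pos s' ∧ (MM F hBorel m' q' r').pos t'

def Pc (m m' : ℕ) (s t : List ℝ) (c : ℝ) : Prop :=
  ∀ q r : ℚ, (q : ℝ) < c → c < (r : ℝ) → V F hBorel m m' s t q r

lemma Pc_unique {m m' : ℕ} {s t : List ℝ} (hfe : forcesEq F hBorel m m' s t) :
    ∀ c₁ c₂, Pc F hBorel m m' s t c₁ → Pc F hBorel m m' s t c₂ → c₁ = c₂ := by
  have H : ∀ c₁ c₂, c₁ < c₂ → Pc F hBorel m m' s t c₁ → Pc F hBorel m m' s t c₂ → False := by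
    intro c₁ c₂ hlt h1 h2
    obtain ⟨q, hq⟩ := exists_rat_lt c₁
    obtain ⟨r, hr1, hr2⟩ := exists_rat_btwn hlt
    obtain ⟨r', hr'⟩ := exists_rat_gt c₂
    obtain ⟨s₁, t₁, hs₁, ht₁, hp₁, hp₁'⟩ := h1 q r hq hr1
    obtain ⟨s₂, t₂, hs₂, ht₂, hp₂, hp₂'⟩ := h2 r r' hr2 hr'
    exact hfe ⟨s₁, t₂, q, r, r, r', hs₁, ht₂, Or.inl le_rfl, hp₁, hp₂'⟩
  intro c₁ c₂ h1 h2
  rcases lt_trichotomy c₁ c₂ with h | h | h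
  · exact absurd (H c₁ c₂ h h1 h2) (not_false)
  · exact h
  · exact absurd (H c₂ c₁ h h2 h1) (not_false)

def Theta (m m' : ℕ) (s t : List ℝ) : ℝ :=
  if h : ∃ c, Pc F hBorel m m' s t c ∧ ∀ c', Pc F hBorel m m' s t c' → c' = c then h.choose
  else 0

lemma Theta_eq {m m' : ℕ} {s t : List ℝ} (hfe : forcesEq F hBorel m m' s t) {c : ℝ}
    (hc : Pc F hBorel m m' s t c) : Theta F hBorel m m' s t = c := by
  have hex : ∃ c, Pc F hBorel m m' s t c ∧ ∀ c', Pc F hBorel m m' s t c' → c' = c :=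
    ⟨c, hc, fun c' hc' => Pc_unique F hBorel hfe c' c hc' hc⟩
  rw [Theta, dif_pos hex]
  exact (hex.choose_spec.2 c hc).symm

def wD (m : ℕ) (q r : ℚ) (n : ℕ) (s : List ℝ) : List ℝ :=
  ((MM F hBorel m q r).dense n s).choose

lemma wD_prefix (m : ℕ) (q r : ℚ) (n : ℕ) (s : List ℝ) : s <+: wD F hBorel m q r n s :=
  ((MM F hBorel m q r).dense n s).choose_spec.1

lemma wD_mem (m : ℕ) (q r : ℚ) (n : ℕ) (s : List ℝ) :
    (MM F hBorel m q r).D n (wD F hBorel m q r n s) :=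
  ((MM F hBorel m q r).dense n s).choose_spec.2

lemma exists_pairext (m m' : ℕ) (s t : List ℝ) :
    ∃ p : List ℝ × List ℝ, s <+: p.1 ∧ t <+: p.2 ∧
      (forcesEq F hBorel m m' p.1 p.2 ∨ ∃ q r q' r' : ℚ, ((r : ℚ) ≤ q' ∨ r' ≤ q) ∧
        (MM F hBorel m q r).pos p.1 ∧ (MM F hBorel m' q' r').pos p.2) := by
  by_cases h : forcesEq F hBorel m m' s t
  · exact ⟨(s, t), List.prefix_refl s, List.prefix_refl t, Or.inl h⟩
  · obtain ⟨s', t', q, r, q', r', hs, ht, hd, h1, h2⟩ := not_not.mp h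
    exact ⟨(s', t'), hs, ht, Or.inr ⟨q, r, q', r', hd, h1, h2⟩⟩

def wP (m m' : ℕ) (s t : List ℝ) : List ℝ × List ℝ :=
  (exists_pairext F hBorel m m' s t).choose

lemma wP_spec (m m' : ℕ) (s t : List ℝ) :
    s <+: (wP F hBorel m m' s t).1 ∧ t <+: (wP F hBorel m m' s t).2 ∧
      (forcesEq F hBorel m m' (wP F hBorel m m' s t).1 (wP F hBorel m m' s t).2 ∨
        ∃ q r q' r' : ℚ, ((r : ℚ) ≤ q' ∨ r' ≤ q) ∧
          (MM F hBorel m q r).pos (wP F hBorel m m' s t).1 ∧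
          (MM F hBorel m' q' r').pos (wP F hBorel m m' s t).2) :=
  (exists_pairext F hBorel m m' s t).choose_spec

end Main
end Stmt16

noncomputable section
namespace Stmt16
open Classical

def LS (S : Set ℝ) : Set (List ℝ) := {l | ∀ x ∈ l, x ∈ S}

lemma countable_LS {S : Set ℝ} (h : S.Countable) : (LS S).Countable := by
  have : Countable S := h.to_subtype
  have hsub : LS S ⊆ Set.range (fun l : List S => l.map Subtype.val) := by
    intro l hl
    induction l with
    | nil => exact ⟨[], rfl⟩
    | cons a t ih =>
        obtain ⟨lt, hlt⟩ := ih (fun x hx => hl x (List.mem_cons_of_mem _ hx))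
        exact ⟨⟨a, hl a List.mem_cons_self⟩ :: lt, by simp [hlt]⟩
  exact (Set.countable_range _).mono hsub

lemma LS_mono {S T : Set ℝ} (h : S ⊆ T) : LS S ⊆ LS T :=
  fun _ hl x hx => h (hl x hx)

section Main2
variable (F : (ℕ → ℝ) → (ℕ → ℝ)) (hBorel : Measurable F)

def bigstep (S : Set ℝ) : Set ℝ :=
  S ∪ (⋃ (m : ℕ) (q : ℚ) (r : ℚ) (n : ℕ), ⋃ s ∈ LS S, {x | x ∈ wD F hBorel m q r n s}) ∪
    (⋃ (m : ℕ) (m' : ℕ), ⋃ s ∈ LS S, ⋃ t ∈ LS S,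
      ({x | x ∈ (wP F hBorel m m' s t).1} ∪ {x | x ∈ (wP F hBorel m m' s t).2} ∪
        {Theta F hBorel m m' s t}))

lemma bigstep_countable {S : Set ℝ} (h : S.Countable) : (bigstep F hBorel S).Countable := by
  refine (h.union ?_).union ?_
  · refine Set.countable_iUnion fun m => Set.countable_iUnion fun q =>
      Set.countable_iUnion fun r => Set.countable_iUnion fun n => ?_
    exact Set.Countable.biUnion (countable_LS h) fun s _ => (List.finite_toSet _).countable
  · refine Set.countable_iUnion fun m => Set.countable_iUnion fun m' => ?_
    refine Set.Countable.biUnion (countable_LS h) fun s _ => ?_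
    refine Set.Countable.biUnion (countable_LS h) fun t _ => ?_
    exact (((List.finite_toSet _).countable.union (List.finite_toSet _).countable).union
      (Set.countable_singleton _))

lemma subset_bigstep (S : Set ℝ) : S ⊆ bigstep F hBorel S :=
  fun x hx => Or.inl (Or.inl hx)

def AA : ℕ → Set ℝ
  | 0 => {0}
  | k + 1 => bigstep F hBorel (AA k)

def Aom : Set ℝ := ⋃ k, AA F hBorel k

lemma AA_countable (k : ℕ) : (AA F hBorel k).Countable := by
  induction k with
  | zero => exact Set.countable_singleton 0
  | succ k ih => exact bigstep_countable F hBorel ih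

lemma AA_mono : Monotone (AA F hBorel) := by
  apply monotone_nat_of_le_succ
  intro k
  exact subset_bigstep F hBorel _

lemma Aom_countable : (Aom F hBorel).Countable :=
  Set.countable_iUnion (AA_countable F hBorel)

lemma Aom_nonempty : (Aom F hBorel).Nonempty :=
  ⟨0, Set.mem_iUnion.mpr ⟨0, rfl⟩⟩

lemma AA_subset_Aom (k : ℕ) : AA F hBorel k ⊆ Aom F hBorel :=
  Set.subset_iUnion (AA F hBorel) k

lemma exists_stage {l : List ℝ} (hl : l ∈ LS (Aom F hBorel)) :
    ∃ k, l ∈ LS (AA F hBorel k) := by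
  induction l with
  | nil => exact ⟨0, by intro x hx; cases hx⟩
  | cons a t ih =>
      obtain ⟨k₁, hk₁⟩ := ih (fun x hx => hl x (List.mem_cons_of_mem _ hx))
      obtain ⟨k₂, hk₂⟩ := Set.mem_iUnion.mp (hl a List.mem_cons_self)
      refine ⟨max k₁ k₂, ?_⟩
      intro x hx
      rcases List.mem_cons.mp hx with rfl | hx
      · exact AA_mono F hBorel (le_max_right k₁ k₂) hk₂
      · exact AA_mono F hBorel (le_max_left k₁ k₂) (hk₁ x hx)

lemma wD_closure {k : ℕ} {s : List ℝ} (hs : s ∈ LS (AA F hBorel k)) (m : ℕ) (q r : ℚ) (n : ℕ) :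
    wD F hBorel m q r n s ∈ LS (AA F hBorel (k + 1)) := by
  intro x hx
  refine Or.inl (Or.inr ?_)
  exact Set.mem_iUnion.mpr ⟨m, Set.mem_iUnion.mpr ⟨q, Set.mem_iUnion.mpr ⟨r,
    Set.mem_iUnion.mpr ⟨n, Set.mem_biUnion hs hx⟩⟩⟩⟩

lemma wP_closure {k : ℕ} {s t : List ℝ} (hs : s ∈ LS (AA F hBorel k))
    (ht : t ∈ LS (AA F hBorel k)) (m m' : ℕ) :
    (wP F hBorel m m' s t).1 ∈ LS (AA F hBorel (k + 1)) ∧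
      (wP F hBorel m m' s t).2 ∈ LS (AA F hBorel (k + 1)) := by
  constructor <;> intro x hx <;> refine Or.inr ?_ <;>
    exact Set.mem_iUnion.mpr ⟨m, Set.mem_iUnion.mpr ⟨m', Set.mem_biUnion hs
      (Set.mem_biUnion ht (by first
        | exact Or.inl (Or.inl hx)
        | exact Or.inl (Or.inr hx)))⟩⟩

lemma Theta_closure {k : ℕ} {s t : List ℝ} (hs : s ∈ LS (AA F hBorel k))
    (ht : t ∈ LS (AA F hBorel k)) (m m' : ℕ) :
    Theta F hBorel m m' s t ∈ AA F hBorel (k + 1) := by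
  refine Or.inr ?_
  exact Set.mem_iUnion.mpr ⟨m, Set.mem_iUnion.mpr ⟨m', Set.mem_biUnion hs
    (Set.mem_biUnion ht (Or.inr rfl))⟩⟩

end Main2
end Stmt16

noncomputable section
namespace Stmt16
open Classical

/-- tasks to be handled while building the generic pair of enumerations -/
def Task : Type := (ℕ × ℚ × ℚ × ℕ) ⊕ (ℕ × ℚ × ℚ × ℕ) ⊕ (ℕ × ℕ) ⊕ ℕ

instance : Countable Task := by unfold Task; infer_instance
instance : Nonempty Task := ⟨Sum.inr (Sum.inr (Sum.inr 0))⟩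

section Main3
variable (F : (ℕ → ℝ) → (ℕ → ℝ)) (hBorel : Measurable F) (e : ℕ → ℝ) (tk : ℕ → Task)

def coreStep (τ : Task) (p : List ℝ × List ℝ) : List ℝ × List ℝ :=
  match τ with
  | Sum.inl (m, q, r, n) => (wD F hBorel m q r n p.1, p.2)
  | Sum.inr (Sum.inl (m, q, r, n)) => (p.1, wD F hBorel m q r n p.2)
  | Sum.inr (Sum.inr (Sum.inl (m, m'))) => wP F hBorel m m' p.1 p.2
  | Sum.inr (Sum.inr (Sum.inr j)) => (p.1 ++ [e j], p.2 ++ [e j])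

def taskStep (τ : Task) (p : List ℝ × List ℝ) : List ℝ × List ℝ :=
  ((coreStep F hBorel e τ p).1 ++ [e 0], (coreStep F hBorel e τ p).2 ++ [e 0])

def seq : ℕ → List ℝ × List ℝ
  | 0 => ([], [])
  | i + 1 => taskStep F hBorel e (tk i) (seq i)

lemma coreStep_prefix (τ : Task) (p : List ℝ × List ℝ) :
    p.1 <+: (coreStep F hBorel e τ p).1 ∧ p.2 <+: (coreStep F hBorel e τ p).2 := by
  rcases τ with ⟨m, q, r, n⟩ | ⟨m, q, r, n⟩ | ⟨m, m'⟩ | j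
  · exact ⟨wD_prefix F hBorel m q r n p.1, List.prefix_refl _⟩
  · exact ⟨List.prefix_refl _, wD_prefix F hBorel m q r n p.2⟩
  · exact ⟨(wP_spec F hBorel m m' p.1 p.2).1, (wP_spec F hBorel m m' p.1 p.2).2.1⟩
  · exact ⟨List.prefix_append _ _, List.prefix_append _ _⟩

lemma taskStep_prefix (τ : Task) (p : List ℝ × List ℝ) :
    p.1 <+: (taskStep F hBorel e τ p).1 ∧ p.2 <+: (taskStep F hBorel e τ p).2 :=
  ⟨(coreStep_prefix F hBorel e τ p).1.trans (List.prefix_append _ _),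
    (coreStep_prefix F hBorel e τ p).2.trans (List.prefix_append _ _)⟩

lemma taskStep_len (τ : Task) (p : List ℝ × List ℝ) :
    p.1.length < (taskStep F hBorel e τ p).1.length ∧
      p.2.length < (taskStep F hBorel e τ p).2.length := by
  constructor
  · have := (coreStep_prefix F hBorel e τ p).1.length_le
    simp only [taskStep, List.length_append, List.length_cons, List.length_nil]
    omega
  · have := (coreStep_prefix F hBorel e τ p).2.length_le
    simp only [taskStep, List.length_append, List.length_cons, List.length_nil]
    omega

lemma seq_mono {i j : ℕ} (h : i ≤ j) :
    (seq F hBorel e tk i).1 <+: (seq F hBorel e tk j).1 ∧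
      (seq F hBorel e tk i).2 <+: (seq F hBorel e tk j).2 := by
  induction j with
  | zero =>
      have : i = 0 := Nat.le_zero.mp h
      subst this
      exact ⟨List.prefix_refl _, List.prefix_refl _⟩
  | succ j ih =>
      rcases Nat.lt_or_ge i (j + 1) with h' | h'
      · have hij : i ≤ j := Nat.lt_succ_iff.mp h'
        have h1 := ih hij
        have h2 := taskStep_prefix F hBorel e (tk j) (seq F hBorel e tk j)
        exact ⟨h1.1.trans h2.1, h1.2.trans h2.2⟩
      · have : i = j + 1 := le_antisymm h h'
        subst this
        exact ⟨List.prefix_refl _, List.prefix_refl _⟩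

lemma seq_len (i : ℕ) :
    i ≤ (seq F hBorel e tk i).1.length ∧ i ≤ (seq F hBorel e tk i).2.length := by
  induction i with
  | zero => exact ⟨Nat.zero_le _, Nat.zero_le _⟩
  | succ i ih =>
      have h2 := taskStep_len F hBorel e (tk i) (seq F hBorel e tk i)
      have e1 : seq F hBorel e tk (i + 1) = taskStep F hBorel e (tk i) (seq F hBorel e tk i) :=
        rfl
      rw [e1]
      exact ⟨by have := h2.1; omega, by have := h2.2; omega⟩

/-- the generic enumerations -/
def yy : ℕ → ℝ := fun idx => (seq F hBorel e tk (idx + 1)).1.getD idx 0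
def zz : ℕ → ℝ := fun idx => (seq F hBorel e tk (idx + 1)).2.getD idx 0

lemma getD_of_prefix {l₁ l₂ : List ℝ} (h : l₁ <+: l₂) {idx : ℕ} (hidx : idx < l₁.length) :
    l₁.getD idx 0 = l₂.getD idx 0 := by
  rw [List.getD_eq_getElem l₁ 0 hidx,
    List.getD_eq_getElem l₂ 0 (lt_of_lt_of_le hidx h.length_le)]
  exact h.getElem hidx

lemma seq_agree1 (i idx : ℕ) (h : idx < (seq F hBorel e tk i).1.length) :
    (seq F hBorel e tk i).1.getD idx 0 = yy F hBorel e tk idx := by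
  rcases le_total i (idx + 1) with hc | hc
  · exact getD_of_prefix (seq_mono F hBorel e tk hc).1 h
  · exact (getD_of_prefix (seq_mono F hBorel e tk hc).1
      (lt_of_lt_of_le (Nat.lt_succ_self idx) (seq_len F hBorel e tk (idx+1)).1)).symm

lemma seq_agree2 (i idx : ℕ) (h : idx < (seq F hBorel e tk i).2.length) :
    (seq F hBorel e tk i).2.getD idx 0 = zz F hBorel e tk idx := by
  rcases le_total i (idx + 1) with hc | hc
  · exact getD_of_prefix (seq_mono F hBorel e tk hc).2 h
  · exact (getD_of_prefix (seq_mono F hBorel e tk hc).2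
      (lt_of_lt_of_le (Nat.lt_succ_self idx) (seq_len F hBorel e tk (idx+1)).2)).symm

lemma eq_pref_of_prefix_seq1 {l : List ℝ} {i : ℕ} (h : l <+: (seq F hBorel e tk i).1) :
    l = pref (yy F hBorel e tk) l.length := by
  apply List.ext_getElem (by simp)
  intro idx h1 h2
  rw [pref_getElem]
  rw [← seq_agree1 F hBorel e tk i idx (lt_of_lt_of_le h1 h.length_le)]
  rw [h.getElem h1, List.getD_eq_getElem _ 0 (lt_of_lt_of_le h1 h.length_le)]

lemma eq_pref_of_prefix_seq2 {l : List ℝ} {i : ℕ} (h : l <+: (seq F hBorel e tk i).2) :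
    l = pref (zz F hBorel e tk) l.length := by
  apply List.ext_getElem (by simp)
  intro idx h1 h2
  rw [pref_getElem]
  rw [← seq_agree2 F hBorel e tk i idx (lt_of_lt_of_le h1 h.length_le)]
  rw [h.getElem h1, List.getD_eq_getElem _ 0 (lt_of_lt_of_le h1 h.length_le)]

end Main3
end Stmt16

noncomputable section
namespace Stmt16
open Classical

section Main4
variable (F : (ℕ → ℝ) → (ℕ → ℝ)) (hBorel : Measurable F) (e : ℕ → ℝ) (tk : ℕ → Task)

lemma LS_of_prefix {S : Set ℝ} {l l' : List ℝ} (h : l <+: l') (hl' : l' ∈ LS S) : l ∈ LS S :=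
  fun x hx => hl' x (h.sublist.mem hx)

lemma seq_in_LS (he : ∀ j, e j ∈ Aom F hBorel) (i : ℕ) :
    (seq F hBorel e tk i).1 ∈ LS (Aom F hBorel) ∧
      (seq F hBorel e tk i).2 ∈ LS (Aom F hBorel) := by
  induction i with
  | zero => exact ⟨fun x hx => absurd hx List.not_mem_nil, fun x hx => absurd hx
      List.not_mem_nil⟩
  | succ i ih =>
      have hcore : (coreStep F hBorel e (tk i) (seq F hBorel e tk i)).1 ∈ LS (Aom F hBorel) ∧
          (coreStep F hBorel e (tk i) (seq F hBorel e tk i)).2 ∈ LS (Aom F hBorel) := by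
        rcases htk : tk i with ⟨m, q, r, n⟩ | ⟨m, q, r, n⟩ | ⟨m, m'⟩ | j
        · obtain ⟨k, hk⟩ := exists_stage F hBorel ih.1
          refine ⟨?_, by simpa [coreStep, htk] using ih.2⟩
          simp only [coreStep, htk]
          exact LS_mono (AA_subset_Aom F hBorel (k+1)) (wD_closure F hBorel hk m q r n)
        · obtain ⟨k, hk⟩ := exists_stage F hBorel ih.2
          refine ⟨by simpa [coreStep, htk] using ih.1, ?_⟩
          simp only [coreStep, htk]
          exact LS_mono (AA_subset_Aom F hBorel (k+1)) (wD_closure F hBorel hk m q r n)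
        · obtain ⟨k₁, hk₁⟩ := exists_stage F hBorel ih.1
          obtain ⟨k₂, hk₂⟩ := exists_stage F hBorel ih.2
          have hk₁' : (seq F hBorel e tk i).1 ∈ LS (AA F hBorel (max k₁ k₂)) :=
            LS_mono (AA_mono F hBorel (le_max_left _ _)) hk₁
          have hk₂' : (seq F hBorel e tk i).2 ∈ LS (AA F hBorel (max k₁ k₂)) :=
            LS_mono (AA_mono F hBorel (le_max_right _ _)) hk₂
          have := wP_closure F hBorel hk₁' hk₂' m m'
          constructor
          · simp only [coreStep, htk]
            exact LS_mono (AA_subset_Aom F hBorel _) this.1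
          · simp only [coreStep, htk]
            exact LS_mono (AA_subset_Aom F hBorel _) this.2
        · constructor
          · simp only [coreStep, htk]
            intro x hx
            rcases List.mem_append.mp hx with hx | hx
            · exact ih.1 x hx
            · rw [List.mem_singleton.mp hx]; exact he j
          · simp only [coreStep, htk]
            intro x hx
            rcases List.mem_append.mp hx with hx | hx
            · exact ih.2 x hx
            · rw [List.mem_singleton.mp hx]; exact he j
      constructor
      · intro x hx
        rcases List.mem_append.mp hx with hx | hx
        · exact hcore.1 x hx
        · rw [List.mem_singleton.mp hx]; exact he 0
      · intro x hx
        rcases List.mem_append.mp hx with hx | hx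
        · exact hcore.2 x hx
        · rw [List.mem_singleton.mp hx]; exact he 0

lemma yy_gen (he : ∀ j, e j ∈ Aom F hBorel) (htk : Function.Surjective tk) (m : ℕ) (q r : ℚ) :
    (MM F hBorel m q r).gen (yy F hBorel e tk) := by
  intro n
  obtain ⟨i, hi⟩ := htk (Sum.inl (m, q, r, n))
  set l := wD F hBorel m q r n (seq F hBorel e tk i).1 with hl
  have hstep : (seq F hBorel e tk (i+1)).1 = l ++ [e 0] := by
    show (taskStep F hBorel e (tk i) (seq F hBorel e tk i)).1 = _
    rw [hi]; rfl
  have hpre : l <+: (seq F hBorel e tk (i+1)).1 := by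
    rw [hstep]; exact List.prefix_append _ _
  have heq := eq_pref_of_prefix_seq1 F hBorel e tk hpre
  exact ⟨l.length, by rw [← heq]; exact wD_mem F hBorel m q r n _⟩

lemma zz_gen (he : ∀ j, e j ∈ Aom F hBorel) (htk : Function.Surjective tk) (m : ℕ) (q r : ℚ) :
    (MM F hBorel m q r).gen (zz F hBorel e tk) := by
  intro n
  obtain ⟨i, hi⟩ := htk (Sum.inr (Sum.inl (m, q, r, n)))
  set l := wD F hBorel m q r n (seq F hBorel e tk i).2 with hl
  have hstep : (seq F hBorel e tk (i+1)).2 = l ++ [e 0] := by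
    show (taskStep F hBorel e (tk i) (seq F hBorel e tk i)).2 = _
    rw [hi]; rfl
  have hpre : l <+: (seq F hBorel e tk (i+1)).2 := by
    rw [hstep]; exact List.prefix_append _ _
  have heq := eq_pref_of_prefix_seq2 F hBorel e tk hpre
  exact ⟨l.length, by rw [← heq]; exact wD_mem F hBorel m q r n _⟩

lemma pair_meet (he : ∀ j, e j ∈ Aom F hBorel) (htk : Function.Surjective tk) (m m' : ℕ) :
    ∃ s t : List ℝ, s ∈ LS (Aom F hBorel) ∧ t ∈ LS (Aom F hBorel) ∧
      s = pref (yy F hBorel e tk) s.length ∧ t = pref (zz F hBorel e tk) t.length ∧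
      (forcesEq F hBorel m m' s t ∨ ∃ q r q' r' : ℚ, ((r : ℚ) ≤ q' ∨ r' ≤ q) ∧
        (MM F hBorel m q r).pos s ∧ (MM F hBorel m' q' r').pos t) := by
  obtain ⟨i, hi⟩ := htk (Sum.inr (Sum.inr (Sum.inl (m, m'))))
  set p := seq F hBorel e tk i with hp
  set s := (wP F hBorel m m' p.1 p.2).1 with hs
  set t := (wP F hBorel m m' p.1 p.2).2 with ht
  have hstep1 : (seq F hBorel e tk (i+1)).1 = s ++ [e 0] := by
    show (taskStep F hBorel e (tk i) (seq F hBorel e tk i)).1 = _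
    rw [hi]; rfl
  have hstep2 : (seq F hBorel e tk (i+1)).2 = t ++ [e 0] := by
    show (taskStep F hBorel e (tk i) (seq F hBorel e tk i)).2 = _
    rw [hi]; rfl
  have hpre1 : s <+: (seq F hBorel e tk (i+1)).1 := by
    rw [hstep1]; exact List.prefix_append _ _
  have hpre2 : t <+: (seq F hBorel e tk (i+1)).2 := by
    rw [hstep2]; exact List.prefix_append _ _
  refine ⟨s, t, LS_of_prefix hpre1 (seq_in_LS F hBorel e tk he (i+1)).1,
    LS_of_prefix hpre2 (seq_in_LS F hBorel e tk he (i+1)).2,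
    eq_pref_of_prefix_seq1 F hBorel e tk hpre1, eq_pref_of_prefix_seq2 F hBorel e tk hpre2, ?_⟩
  exact (wP_spec F hBorel m m' p.1 p.2).2.2

lemma yy_range (he : ∀ j, e j ∈ Aom F hBorel) (hes : ∀ a ∈ Aom F hBorel, ∃ j, e j = a)
    (htk : Function.Surjective tk) : Set.range (yy F hBorel e tk) = Aom F hBorel := by
  apply Set.eq_of_subset_of_subset
  · rintro a ⟨idx, rfl⟩
    have hlen : idx < (seq F hBorel e tk (idx+1)).1.length :=
      lt_of_lt_of_le (Nat.lt_succ_self idx) (seq_len F hBorel e tk (idx+1)).1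
    have : yy F hBorel e tk idx = (seq F hBorel e tk (idx+1)).1[idx]'hlen := by
      rw [yy, List.getD_eq_getElem _ 0 hlen]
    rw [this]
    exact (seq_in_LS F hBorel e tk he (idx+1)).1 _ (List.getElem_mem _)
  · intro a ha
    obtain ⟨j, rfl⟩ := hes a ha
    obtain ⟨i, hi⟩ := htk (Sum.inr (Sum.inr (Sum.inr j)))
    set p := seq F hBorel e tk i with hp
    have hstep : (seq F hBorel e tk (i+1)).1 = (p.1 ++ [e j]) ++ [e 0] := by
      show (taskStep F hBorel e (tk i) (seq F hBorel e tk i)).1 = _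
      rw [hi]; rfl
    set L := p.1.length with hL
    have hlen : L < (seq F hBorel e tk (i+1)).1.length := by
      rw [hstep]; simp [hL]
    refine ⟨L, ?_⟩
    have h1 : (seq F hBorel e tk (i+1)).1.getD L 0 = yy F hBorel e tk L :=
      seq_agree1 F hBorel e tk (i+1) L hlen
    rw [← h1, List.getD_eq_getElem _ 0 hlen]
    have : ((p.1 ++ [e j]) ++ [e 0])[L]'(by rw [← hstep]; exact hlen) = e j := by
      rw [List.getElem_append]
      have hL1 : L < (p.1 ++ [e j]).length := by simp [hL]
      rw [dif_pos hL1, List.getElem_append]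
      rw [dif_neg (by omega)]
      simp
    rw [← this]
    simp only [hstep]

lemma zz_range (he : ∀ j, e j ∈ Aom F hBorel) (hes : ∀ a ∈ Aom F hBorel, ∃ j, e j = a)
    (htk : Function.Surjective tk) : Set.range (zz F hBorel e tk) = Aom F hBorel := by
  apply Set.eq_of_subset_of_subset
  · rintro a ⟨idx, rfl⟩
    have hlen : idx < (seq F hBorel e tk (idx+1)).2.length :=
      lt_of_lt_of_le (Nat.lt_succ_self idx) (seq_len F hBorel e tk (idx+1)).2
    have : zz F hBorel e tk idx = (seq F hBorel e tk (idx+1)).2[idx]'hlen := by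
      rw [zz, List.getD_eq_getElem _ 0 hlen]
    rw [this]
    exact (seq_in_LS F hBorel e tk he (idx+1)).2 _ (List.getElem_mem _)
  · intro a ha
    obtain ⟨j, rfl⟩ := hes a ha
    obtain ⟨i, hi⟩ := htk (Sum.inr (Sum.inr (Sum.inr j)))
    set p := seq F hBorel e tk i with hp
    have hstep : (seq F hBorel e tk (i+1)).2 = (p.2 ++ [e j]) ++ [e 0] := by
      show (taskStep F hBorel e (tk i) (seq F hBorel e tk i)).2 = _
      rw [hi]; rfl
    set L := p.2.length with hL
    have hlen : L < (seq F hBorel e tk (i+1)).2.length := by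
      rw [hstep]; simp [hL]
    refine ⟨L, ?_⟩
    have h1 : (seq F hBorel e tk (i+1)).2.getD L 0 = zz F hBorel e tk L :=
      seq_agree2 F hBorel e tk (i+1) L hlen
    rw [← h1, List.getD_eq_getElem _ 0 hlen]
    have : ((p.2 ++ [e j]) ++ [e 0])[L]'(by rw [← hstep]; exact hlen) = e j := by
      rw [List.getElem_append]
      have hL1 : L < (p.2 ++ [e j]).length := by simp [hL]
      rw [dif_pos hL1, List.getElem_append]
      rw [dif_neg (by omega)]
      simp
    rw [← this]
    simp only [hstep]

end Main4
end Stmt16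

noncomputable section
namespace Stmt16
open Classical

theorem main (F : (ℕ → ℝ) → (ℕ → ℝ)) (hBorel : Measurable F)
    (hHom : ∀ x y : ℕ → ℝ, Set.range x = Set.range y → Set.range (F x) = Set.range (F y)) :
    ∃ x : ℕ → ℝ, Set.range (F x) ⊆ Set.range x := by
  obtain ⟨e, he⟩ := (Aom_countable F hBorel).exists_eq_range (Aom_nonempty F hBorel)
  have he1 : ∀ j, e j ∈ Aom F hBorel := fun j => he ▸ ⟨j, rfl⟩
  have he2 : ∀ a ∈ Aom F hBorel, ∃ j, e j = a := by
    intro a ha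
    rw [he] at ha
    obtain ⟨j, hj⟩ := ha
    exact ⟨j, hj⟩
  obtain ⟨tk, htk⟩ := exists_surjective_nat Task
  set y := yy F hBorel e tk with hy_def
  set z := zz F hBorel e tk with hz_def
  have hyr : Set.range y = Aom F hBorel := yy_range F hBorel e tk he1 he2 htk
  have hzr : Set.range z = Aom F hBorel := zz_range F hBorel e tk he1 he2 htk
  refine ⟨y, ?_⟩
  rintro c ⟨n, rfl⟩
  rw [hyr]
  have hran : Set.range (F y) = Set.range (F z) := hHom y z (hyr.trans hzr.symm)
  have hmem : F y n ∈ Set.range (F z) := hran ▸ ⟨n, rfl⟩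
  obtain ⟨m', hm'⟩ := hmem
  obtain ⟨s, t, hsA, htA, hsy, htz, hcases⟩ := pair_meet F hBorel e tk he1 htk n m'
  rcases hcases with hfe | ⟨q, r, q', r', hd, h1, h2⟩
  · -- the pair of conditions forces the two values to be equal
    have hPc : Pc F hBorel n m' s t (F y n) := by
      intro q r hq hr
      have hyB : y ∈ Bset F n q r := ⟨hq, hr⟩
      obtain ⟨k₁, hk₁⟩ :=
        (MM F hBorel n q r).complete y (yy_gen F hBorel e tk he1 htk n q r) hyB
      have hzB : z ∈ Bset F m' q r := by
        refine ⟨?_, ?_⟩ <;> rw [show F z m' = F y n from hm']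
        · exact hq
        · exact hr
      obtain ⟨k₂, hk₂⟩ :=
        (MM F hBorel m' q r).complete z (zz_gen F hBorel e tk he1 htk m' q r) hzB
      refine ⟨pref y (max k₁ s.length), pref z (max k₂ t.length), ?_, ?_, ?_, ?_⟩
      · calc s = pref y s.length := hsy
          _ <+: pref y (max k₁ s.length) := pref_prefix y (le_max_right _ _)
      · calc t = pref z t.length := htz
          _ <+: pref z (max k₂ t.length) := pref_prefix z (le_max_right _ _)
      · exact (MM F hBorel n q r).posMono (pref_prefix y (le_max_left _ _)) hk₁
      · exact (MM F hBorel m' q r).posMono (pref_prefix z (le_max_left _ _)) hk₂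
    rw [← Theta_eq F hBorel hfe hPc]
    obtain ⟨k₁, hk₁⟩ := exists_stage F hBorel hsA
    obtain ⟨k₂, hk₂⟩ := exists_stage F hBorel htA
    have hk₁' : s ∈ LS (AA F hBorel (max k₁ k₂)) :=
      LS_mono (AA_mono F hBorel (le_max_left _ _)) hk₁
    have hk₂' : t ∈ LS (AA F hBorel (max k₁ k₂)) :=
      LS_mono (AA_mono F hBorel (le_max_right _ _)) hk₂
    exact AA_subset_Aom F hBorel _ (Theta_closure F hBorel hk₁' hk₂' n m')
  · -- the two sides are forced into disjoint intervals: contradiction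
    exfalso
    have hyB : y ∈ Bset F n q r := by
      apply (MM F hBorel n q r).sound_pos y (yy_gen F hBorel e tk he1 htk n q r) s.length
      rw [← hsy]
      exact h1
    have hzB : z ∈ Bset F m' q' r' := by
      apply (MM F hBorel m' q' r').sound_pos z (zz_gen F hBorel e tk he1 htk m' q' r') t.length
      rw [← htz]
      exact h2
    have hy1 : (q : ℝ) < F y n := hyB.1
    have hy2 : F y n < (r : ℝ) := hyB.2
    have hz1 : (q' : ℝ) < F y n := by rw [← hm']; exact hzB.1
    have hz2 : F y n < (r' : ℝ) := by rw [← hm']; exact hzB.2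
    rcases hd with hd | hd
    · have : (r : ℝ) ≤ (q' : ℝ) := by exact_mod_cast hd
      linarith
    · have : (r' : ℝ) ≤ (q : ℝ) := by exact_mod_cast hd
      linarith

end Stmt16

theorem stmt16 (F : (ℕ → ℝ) → (ℕ → ℝ))
    (hBorel : Measurable F)
    (hHom : ∀ x y : ℕ → ℝ, range x = range y → range (F x) = range (F y)) :
    ∃ x : ℕ → ℝ, range (F x) ⊆ range x := by
  exact Stmt16.main F hBorel hHom
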